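/- Let m,n ≥ 3 and let Λ be the torus lattice with n columns and m rows of vertices; let μ be the uniform probability measure on the set Δ_8vx of eight-vertex configurations on Λ. Let EF be the event that a fixed column of m horizontal edges (the horizontal edges whose left endpoints share a fixed first coordinate, one in each row) all point to the left. Then μ(EF) = 2^{−m}. -/

import Mathlib

open scoped BigOperators

namespace Toric

/-- Vertices of the `m × n` torus lattice. Faces are also indexed by `Vtx`
(the face `p` is the unit square whose lower-left corner is `p`). -/
abbrev Vtx (m n : ℕ) := ZMod m × ZMod n

/-- Edges of the torus: `(s, true)` is the horizontal edge from `s` to its right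
neighbour, `(s, false)` the vertical edge from `s` to its upper neighbour. -/
abbrev Edge (m n : ℕ) := Vtx m n × Bool

variable (m n : ℕ)

/-- The four edges incident to the vertex `s`, in a fixed order:
right, up, left, down. -/
def star (s : Vtx m n) : Fin 4 → Edge m n :=
  ![(s, true), (s, false), ((s.1 - 1, s.2), true), ((s.1, s.2 - 1), false)]

/-- The four edges bounding the face `p`, in a fixed order:
bottom, left, top, right. -/
def faceEdge (p : Vtx m n) : Fin 4 → Edge m n :=
  ![(p, true), (p, false), ((p.1, p.2 + 1), true), ((p.1 + 1, p.2), false)]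

/-- The set of the four edges incident to the vertex `s` (written `e ∼ s`). -/
def starSet (s : Vtx m n) : Finset (Edge m n) := Finset.univ.image (star m n s)

/-- The set of the four edges bounding the face `p` (written `e ∼ p`). -/
def faceSet (p : Vtx m n) : Finset (Edge m n) := Finset.univ.image (faceEdge m n p)

/-- Arrow configurations: each edge points right/up (`true`) or left/down (`false`). -/
abbrev AConf (m n : ℕ) := Edge m n → Bool

/-- Which of the four edges at `s` are incoming (point towards `s`). -/
def incVec (d : AConf m n) (s : Vtx m n) : Fin 4 → Bool :=
  ![!d (star m n s 0), !d (star m n s 1), d (star m n s 2), d (star m n s 3)]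

/-- Eight-vertex condition: every vertex has an even number of incoming arrows. -/
def IsEightVertex (d : AConf m n) : Prop :=
  ∀ s : Vtx m n, Even (Finset.univ.filter (fun i => incVec m n d s i = true)).card

/-- A local vertex type `η : Fin 4 → Bool` (arrow directions of the four incident
edges, in the order right, up, left, down) is one of the eight allowed vertex types
I–VIII iff the number of incoming arrows is even. -/
def IsVertexType (η : Fin 4 → Bool) : Prop :=
  Even (Finset.univ.filter
    (fun i => (![!η 0, !η 1, η 2, η 3] : Fin 4 → Bool) i = true)).card

/-- The event `A^η_C` that every vertex of `C` exhibits the type `η` or its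
total reversal. -/
def EventA (η : Fin 4 → Bool) (C : Finset (Vtx m n)) (d : AConf m n) : Prop :=
  ∀ s ∈ C, (∀ i, d (star m n s i) = η i) ∨ (∀ i, d (star m n s i) = !η i)

/-- The event `A^{η,ν}_C` that every vertex of `C` exhibits the type `η` or `ν`
or one of their total reversals. -/
def EventA2 (η ν : Fin 4 → Bool) (C : Finset (Vtx m n)) (d : AConf m n) : Prop :=
  ∀ s ∈ C, (∀ i, d (star m n s i) = η i) ∨ (∀ i, d (star m n s i) = !η i) ∨
    (∀ i, d (star m n s i) = ν i) ∨ (∀ i, d (star m n s i) = !ν i)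

/-- A non-contractible cycle of vertices of `C`: a cyclic sequence of vertices of `C`
whose consecutive vertices are nearest neighbours on the torus (with the actual
`ℤ²`-valued unit steps recorded), and whose winding number (the total displacement
in `ℤ²`) is nonzero. -/
structure NCCycle (C : Set (Vtx m n)) where
  len : ℕ
  len_pos : 0 < len
  v : ℕ → Vtx m n
  step : ℕ → ℤ × ℤ
  mem : ∀ i < len, v i ∈ C
  unit : ∀ i < len,
    step i = (1, 0) ∨ step i = (-1, 0) ∨ step i = (0, 1) ∨ step i = (0, -1)
  succ : ∀ i < len,
    v (i + 1) = ((v i).1 + ((step i).1 : ZMod m), (v i).2 + ((step i).2 : ZMod n))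
  closed : v len = v 0
  winding : ∑ i ∈ Finset.range len, step i ≠ 0

/-- Hypothesis (★): either `C` contains no non-contractible cycle, or every
non-contractible cycle in `C` has even length. -/
def StarHyp (C : Set (Vtx m n)) : Prop :=
  IsEmpty (NCCycle m n C) ∨ ∀ γ : NCCycle m n C, Even γ.len

section torusProb
variable [NeZero m] [NeZero n]

/-- The set `Δ_8vx` of eight-vertex configurations on the torus. -/
noncomputable def Δ8 : Finset (AConf m n) :=
  haveI := Classical.decPred (IsEightVertex m n)
  Finset.univ.filter (IsEightVertex m n)

/-- The uniform eight-vertex probability measure `μ`. -/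
noncomputable def prob (P : AConf m n → Prop) : ℝ :=
  haveI := Classical.decPred P
  (((Δ8 m n).filter P).card : ℝ) / ((Δ8 m n).card : ℝ)

end torusProb

/-- Spin configurations `Ω = {-1,+1}^E`. -/
abbrev SConf (m n : ℕ) := Edge m n → ℤˣ

section matrices
variable [NeZero m] [NeZero n]

/-- Real matrices indexed by the spin configurations (i.e. operators expressed in
the `σ³` product basis). -/
abbrev Mat (m n : ℕ) [NeZero m] [NeZero n] := Matrix (SConf m n) (SConf m n) ℝ

/-- The spin configuration `x^p`, equal to `-1` exactly on the edges of the face `p`. -/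
def xconf (p : Vtx m n) : SConf m n := fun e => if e ∈ faceSet m n p then -1 else 1

/-- The spin configuration equal to `-1` exactly on the edges of a set `A`. -/
def aconf (A : Finset (Edge m n)) : SConf m n := fun e => if e ∈ A then -1 else 1

/-- The plaquette operator `X_p = ∏_{e ∼ p} σ¹_e`: the permutation matrix flipping
the spins on the four edges of `p`. -/
def X (p : Vtx m n) : Mat m n := fun τ ω => if τ = xconf m n p * ω then 1 else 0

/-- `X_A = ∏_{e ∈ A} σ¹_e`: the permutation matrix flipping the spins on `A`. -/
def XA (A : Finset (Edge m n)) : Mat m n := fun τ ω => if τ = aconf m n A * ω then 1 else 0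

/-- The product `∏_{p ∈ C} X_p` of plaquette operators: the permutation matrix
flipping the spins around all faces of `C`. -/
def XProd (C : Finset (Vtx m n)) : Mat m n :=
  fun τ ω => if τ = (∏ p ∈ C, xconf m n p) * ω then 1 else 0

/-- The star operator `Z_s = ∏_{e ∼ s} σ³_e` (a diagonal matrix). -/
def Z (s : Vtx m n) : Mat m n :=
  Matrix.diagonal fun ω => (((∏ e ∈ starSet m n s, ω e : ℤˣ) : ℤ) : ℝ)

/-- `Z_A = ∏_{e ∈ A} σ³_e` (a diagonal matrix). -/
def ZA (A : Finset (Edge m n)) : Mat m n :=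
  Matrix.diagonal fun ω => (((∏ e ∈ A, ω e : ℤˣ) : ℤ) : ℝ)

/-- The product `∏_{s ∈ D} Z_s` of star operators (a diagonal matrix). -/
def ZProd (D : Finset (Vtx m n)) : Mat m n :=
  Matrix.diagonal fun ω => (((∏ s ∈ D, ∏ e ∈ starSet m n s, ω e : ℤˣ) : ℤ) : ℝ)

/-- The toric code Hamiltonian `H = -∑_p Jˣ_p X_p - ∑_s Jᶻ_s Z_s`. -/
noncomputable def H (Jx Jz : Vtx m n → ℝ) : Mat m n :=
  -∑ p : Vtx m n, Jx p • X m n p - ∑ s : Vtx m n, Jz s • Z m n s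

/-- Matrix exponential. -/
noncomputable def mexp (A : Mat m n) : Mat m n := NormedSpace.exp A

/-- The equilibrium state `⟨A⟩ = tr(A e^{-H}) / tr(e^{-H})`. -/
noncomputable def gibbs (Jx Jz : Vtx m n → ℝ) (A : Mat m n) : ℝ :=
  (A * mexp m n (-H m n Jx Jz)).trace / (mexp m n (-H m n Jx Jz)).trace

end matrices

/-- The scalar `I^ε_s(σ) = (1/16) ∏_{i=1}^4 (1 + ε_i σ_i(s))`. -/
noncomputable def Ifun (ε : Fin 4 → ℤˣ) (s : Vtx m n) (σ : SConf m n) : ℝ :=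
  (1 / 16 : ℝ) * ∏ i : Fin 4, (1 + ((ε i : ℤ) : ℝ) * ((σ (star m n s i) : ℤ) : ℝ))

/-- The scalar `Ī^ε_s(σ) = (1/16) ∏_{i=1}^4 (1 - ε_i σ_i(s))`. -/
noncomputable def Ibar (ε : Fin 4 → ℤˣ) (s : Vtx m n) (σ : SConf m n) : ℝ :=
  (1 / 16 : ℝ) * ∏ i : Fin 4, (1 - ((ε i : ℤ) : ℝ) * ((σ (star m n s i) : ℤ) : ℝ))

/-- `I^ε_C(σ) = ∏_{s ∈ C} (I^ε_s(σ) + Ī^ε_s(σ))`: the indicator that around every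
vertex of `C` the spins all agree with `ε` or are all opposite. -/
noncomputable def IC (ε : Fin 4 → ℤˣ) (C : Finset (Vtx m n)) (σ : SConf m n) : ℝ :=
  ∏ s ∈ C, (Ifun m n ε s σ + Ibar m n ε s σ)

/-- `I^{ε,δ}_C(σ) = ∏_{s ∈ C} (I^ε_s(σ) + Ī^ε_s(σ) + I^δ_s(σ) + Ī^δ_s(σ))`. -/
noncomputable def IC2 (ε δ : Fin 4 → ℤˣ) (C : Finset (Vtx m n)) (σ : SConf m n) : ℝ :=
  ∏ s ∈ C, (Ifun m n ε s σ + Ibar m n ε s σ + Ifun m n δ s σ + Ibar m n δ s σ)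

section matrices2
variable [NeZero m] [NeZero n]

/-- The (diagonal) operator `Q^ε_C = ∏_{s ∈ C} (P^ε_s + P̄^ε_s)`, where
`P^ε_s = (1/16) ∏_i (1 + ε_i σ³_i(s))` and `P̄^ε_s = (1/16) ∏_i (1 - ε_i σ³_i(s))`. -/
noncomputable def Q (ε : Fin 4 → ℤˣ) (C : Finset (Vtx m n)) : Mat m n :=
  Matrix.diagonal (IC m n ε C)

/-- The (diagonal) operator `Q^{ε,δ}_C = ∏_{s ∈ C} (P^ε_s + P̄^ε_s + P^δ_s + P̄^δ_s)`. -/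
noncomputable def Q2 (ε δ : Fin 4 → ℤˣ) (C : Finset (Vtx m n)) : Mat m n :=
  Matrix.diagonal (IC2 m n ε δ C)

/-- Expectation `E_J[f]` under the four-body Ising measure
`P_J(σ) ∝ exp(∑_s J_s ∏_{e ∼ s} σ_e)`. -/
noncomputable def isingE (J : Vtx m n → ℝ) (f : SConf m n → ℝ) : ℝ :=
  (∑ σ : SConf m n, f σ *
      Real.exp (∑ s : Vtx m n, J s * (((∏ e ∈ starSet m n s, σ e : ℤˣ) : ℤ) : ℝ))) /
    (∑ σ : SConf m n,
      Real.exp (∑ s : Vtx m n, J s * (((∏ e ∈ starSet m n s, σ e : ℤˣ) : ℤ) : ℝ)))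

end matrices2

end Toric

namespace ToricAux

/-- Flip all horizontal edges in the rows selected by `S`. -/
def act (m n : ℕ) (S : ZMod m → Bool) (d : Toric.AConf n m) : Toric.AConf n m :=
  fun e => xor (e.2 && S e.1.2) (d e)

lemma even_iff_xor : ∀ v : Fin 4 → Bool,
    (Even (Finset.univ.filter (fun i => v i = true)).card ↔
      xor (v 0) (xor (v 1) (xor (v 2) (v 3))) = false) := by decide

lemma even_incVec_iff (m n : ℕ) (d : Toric.AConf n m) (s : Toric.Vtx n m) :
    Even (Finset.univ.filter (fun i => Toric.incVec n m d s i = true)).card ↔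
      xor (d (s, true)) (xor (d (s, false))
        (xor (d ((s.1 - 1, s.2), true)) (d ((s.1, s.2 - 1), false)))) = false := by
  rw [even_iff_xor]
  have h0 : Toric.incVec n m d s 0 = !d (s, true) := rfl
  have h1 : Toric.incVec n m d s 1 = !d (s, false) := rfl
  have h2 : Toric.incVec n m d s 2 = d ((s.1 - 1, s.2), true) := rfl
  have h3 : Toric.incVec n m d s 3 = d ((s.1, s.2 - 1), false) := rfl
  rw [h0, h1, h2, h3]
  cases d (s, true) <;> cases d (s, false) <;> cases d ((s.1 - 1, s.2), true) <;>
    cases d ((s.1, s.2 - 1), false) <;> rfl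

lemma isEV_act (m n : ℕ) (S : ZMod m → Bool) (d : Toric.AConf n m) :
    Toric.IsEightVertex n m (act m n S d) ↔ Toric.IsEightVertex n m d := by
  refine forall_congr' fun s => ?_
  rw [even_incVec_iff, even_incVec_iff]
  simp only [act]
  cases S s.2 <;> cases d (s, true) <;> cases d (s, false) <;>
    cases d ((s.1 - 1, s.2), true) <;> cases d ((s.1, s.2 - 1), false) <;> rfl

lemma act_act (m n : ℕ) (S : ZMod m → Bool) (d : Toric.AConf n m) :
    act m n S (act m n S d) = d := by
  funext e
  simp only [act]
  cases e.2 && S e.1.2 <;> cases d e <;> rfl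

end ToricAux

namespace ToricAux

lemma act_col (m n : ℕ) (S : ZMod m → Bool) (d : Toric.AConf n m) (x : ZMod n) (y : ZMod m) :
    act m n S d ((x, y), true) = xor (S y) (d ((x, y), true)) := by
  show xor (true && S y) (d ((x, y), true)) = _
  cases S y <;> rfl

lemma P_act (m n : ℕ) (r : ZMod n) (d : Toric.AConf n m) (y : ZMod m) :
    act m n (fun y => d ((r, y), true)) d ((r, y), true) = false := by
  rw [act_col]
  cases d ((r, y), true) <;> rfl

lemma col_act (m n : ℕ) (S : ZMod m → Bool) (d : Toric.AConf n m)
    (r : ZMod n) (h : ∀ y : ZMod m, d ((r, y), true) = false) :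
    (fun y => act m n S d ((r, y), true)) = S := by
  funext y
  rw [act_col, h y]
  cases S y <;> rfl

variable (m n : ℕ) [NeZero m] [NeZero n]

lemma mem_iff (d : Toric.AConf n m) : d ∈ Toric.Δ8 n m ↔ Toric.IsEightVertex n m d := by
  classical
  simp only [Toric.Δ8, Finset.filter_congr_decidable, Finset.mem_filter, Finset.mem_univ,
    true_and]

lemma card_aux (r : ZMod n) :
    (Toric.Δ8 n m).card =
      ((Toric.Δ8 n m).filter (fun d => ∀ y : ZMod m, d ((r, y), true) = false)).card * 2 ^ m := by
  have h2 : ((Toric.Δ8 n m).filter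
      (fun d => ∀ y : ZMod m, d ((r, y), true) = false)).card * 2 ^ m =
      (((Toric.Δ8 n m).filter (fun d => ∀ y : ZMod m, d ((r, y), true) = false)) ×ˢ
        (Finset.univ : Finset (ZMod m → Bool))).card := by
    rw [Finset.card_product, Finset.card_univ, Fintype.card_fun, Fintype.card_bool, ZMod.card]
  rw [h2]
  refine Finset.card_nbij'
    (i := fun d => (act m n (fun y => d ((r, y), true)) d, fun y => d ((r, y), true)))
    (j := fun p => act m n p.2 p.1) ?_ ?_ ?_ ?_
  · intro d hd
    dsimp only
    exact Finset.mk_mem_product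
      (Finset.mem_filter.mpr
        ⟨(mem_iff m n _).mpr ((isEV_act m n (fun y => d ((r, y), true)) d).mpr
            ((mem_iff m n d).mp hd)),
         fun y => P_act m n r d y⟩)
      (Finset.mem_univ _)
  · intro p hp
    have h1 := Finset.mem_filter.mp (Finset.mem_product.mp hp).1
    exact (mem_iff m n _).mpr ((isEV_act m n p.2 p.1).mpr ((mem_iff m n p.1).mp h1.1))
  · intro d _
    exact act_act m n _ d
  · intro p hp
    have h1 := Finset.mem_filter.mp (Finset.mem_product.mp hp).1
    have hS := col_act m n p.2 p.1 r h1.2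
    refine Prod.ext ?_ hS
    show act m n (fun y => act m n p.2 p.1 ((r, y), true)) (act m n p.2 p.1) = p.1
    rw [hS, act_act m n p.2 p.1]

end ToricAux

/-- Emptiness formation probability on the torus with `n` columns
and `m` rows: the probability under the uniform eight-vertex measure that a fixed
column of `m` horizontal edges (those whose left endpoints have first coordinate `r`)
all point to the left is `2^{-m}`. -/
theorem torus_emptiness_formation (m n : ℕ) [NeZero m] [NeZero n]
    (hm : 3 ≤ m) (hn : 3 ≤ n) (r : ZMod n) :
    Toric.prob n m (fun d => ∀ y : ZMod m, d ((r, y), true) = false) =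
      ((2 : ℝ) ^ m)⁻¹ := by
  have hne : 0 < ((Toric.Δ8 n m).filter
      (fun d => ∀ y : ZMod m, d ((r, y), true) = false)).card := by
    refine Finset.card_pos.mpr ⟨fun _ => false, Finset.mem_filter.mpr
      ⟨(ToricAux.mem_iff m n _).mpr fun s => ?_, fun y => rfl⟩⟩
    rw [ToricAux.even_incVec_iff m n (fun _ => false) s]
    rfl
  have hprob : Toric.prob n m (fun d => ∀ y : ZMod m, d ((r, y), true) = false) =
      (((Toric.Δ8 n m).filter
          (fun d => ∀ y : ZMod m, d ((r, y), true) = false)).card : ℝ) /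
        ((Toric.Δ8 n m).card : ℝ) := by
    unfold Toric.prob
    rw [Finset.filter_congr_decidable]
  rw [hprob, ToricAux.card_aux m n r]
  have hE : (((Toric.Δ8 n m).filter
      (fun d => ∀ y : ZMod m, d ((r, y), true) = false)).card : ℝ) ≠ 0 := by
    exact_mod_cast hne.ne'
  push_cast
  rw [← div_div, div_self hE, one_div]
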